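/- (Theorem 1) Let Q and R be Borel probability measures on ℝ^K supported on (0,1]^K. Then the conditional cell probabilities agree, i.e. π̃_{Q,h} = π̃_{R,h} for all h ∈ H*, if and only if there exists a real constant A > 0 such that m_{Q,h} = A·m_{R,h} for all h ∈ H*. Moreover, in that case A = (1−π_{Q,0})/(1−π_{R,0}). -/

import Mathlib

open Finset MeasureTheory

/-- The set `H* = {0,1}^K \ {0}` of nonzero binary inclusion patterns. -/
def Hstar (K : ℕ) : Finset (Fin K → Bool) :=
  Finset.univ.filter (fun h => h ≠ fun _ => false)

/-- The cell probability `π_{Q,h} = E_Q[∏_k λ_k^{h_k} (1-λ_k)^{1-h_k}]`. -/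
noncomputable def cellProb {K : ℕ} (Q : Measure (Fin K → ℝ)) (h : Fin K → Bool) : ℝ :=
  ∫ x, (∏ k, (if h k then x k else 1 - x k)) ∂Q

/-- The missing cell probability `π_{Q,0}`. -/
noncomputable def missProb {K : ℕ} (Q : Measure (Fin K → ℝ)) : ℝ :=
  cellProb Q (fun _ => false)

/-- The conditional cell probability `π̃_{Q,h} = π_{Q,h} / (1 − π_{Q,0})`. -/
noncomputable def condCellProb {K : ℕ} (Q : Measure (Fin K → ℝ)) (h : Fin K → Bool) : ℝ :=
  cellProb Q h / (1 - missProb Q)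

/-- The mixed moment `m_{Q,h} = E_Q[∏_k λ_k^{h_k}]`. -/
noncomputable def mixedMoment {K : ℕ} (Q : Measure (Fin K → ℝ)) (h : Fin K → Bool) : ℝ :=
  ∫ x, (∏ k, (if h k then x k else 1)) ∂Q

/-! ### Auxiliary machinery -/

/-- The set of patterns `g ≥ h`. -/
def Tset {K : ℕ} (h : Fin K → Bool) : Finset (Fin K → Bool) :=
  Fintype.piFinset (fun k => if h k then {true} else Finset.univ)

/-- The sign `σ(h,g)`. -/
def sgn {K : ℕ} (h g : Fin K → Bool) : ℝ :=
  ∏ k, (if g k then (if h k then (1:ℝ) else -1) else 1)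

lemma mem_Tset {K : ℕ} {h g : Fin K → Bool} :
    g ∈ Tset h ↔ ∀ k, h k = true → g k = true := by
  simp only [Tset, Fintype.mem_piFinset]
  constructor
  · intro H k hk
    have := H k
    rw [hk] at this
    simpa using this
  · intro H k
    by_cases hk : h k
    · simp [hk, H k hk]
    · simp [hk]

lemma mem_Hstar_iff {K : ℕ} {h : Fin K → Bool} :
    h ∈ Hstar K ↔ ∃ k, h k = true := by
  simp only [Hstar, Finset.mem_filter, Finset.mem_univ, true_and]
  constructor
  · intro hne
    by_contra hc
    push_neg at hc
    exact hne (funext fun k => by simpa using hc k)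
  · rintro ⟨k, hk⟩ hc
    have := congrFun hc k
    rw [hk] at this
    simp at this

lemma mem_Hstar_of_Tset {K : ℕ} {h g : Fin K → Bool} (hh : h ∈ Hstar K)
    (hg : g ∈ Tset h) : g ∈ Hstar K := by
  obtain ⟨k, hk⟩ := mem_Hstar_iff.mp hh
  exact mem_Hstar_iff.mpr ⟨k, mem_Tset.mp hg k hk⟩

lemma pointwise_I1 {K : ℕ} (h : Fin K → Bool) (x : Fin K → ℝ) :
    (∏ k, (if h k then x k else 1)) =
      ∑ g ∈ Tset h, ∏ k, (if g k then x k else 1 - x k) := by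
  calc (∏ k, (if h k then x k else 1))
      = ∏ k, ∑ c ∈ (if h k then ({true} : Finset Bool) else Finset.univ),
          (if c then x k else 1 - x k) := by
        apply Finset.prod_congr rfl
        intro k _
        by_cases hk : h k
        · simp [hk]
        · rw [if_neg hk, if_neg hk, Fintype.sum_bool, if_pos rfl, if_neg (by simp)]
          ring
    _ = ∑ g ∈ Tset h, ∏ k, (if g k then x k else 1 - x k) :=
        Finset.prod_univ_sum (fun k => if h k then ({true} : Finset Bool) else Finset.univ)
          (fun k c => if c then x k else 1 - x k)

lemma pointwise_I2 {K : ℕ} (h : Fin K → Bool) (x : Fin K → ℝ) :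
    (∏ k, (if h k then x k else 1 - x k)) =
      ∑ g ∈ Tset h, sgn h g * ∏ k, (if g k then x k else 1) := by
  have key : (∏ k, (if h k then x k else 1 - x k)) =
      ∑ g ∈ Tset h, ∏ k, (if g k then (if h k then x k else -x k) else 1) := by
    calc (∏ k, (if h k then x k else 1 - x k))
        = ∏ k, ∑ c ∈ (if h k then ({true} : Finset Bool) else Finset.univ),
            (if c then (if h k then x k else -x k) else 1) := by
          apply Finset.prod_congr rfl
          intro k _
          by_cases hk : h k
          · simp [hk]
          · rw [if_neg hk, if_neg hk, Fintype.sum_bool, if_pos rfl, if_neg hk,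
              if_neg (by simp : ¬(false = true))]
            ring
      _ = ∑ g ∈ Tset h, ∏ k, (if g k then (if h k then x k else -x k) else 1) :=
          Finset.prod_univ_sum (fun k => if h k then ({true} : Finset Bool) else Finset.univ)
            (fun k c => if c then (if h k then x k else -x k) else 1)
  rw [key]
  apply Finset.sum_congr rfl
  intro g _
  rw [sgn, ← Finset.prod_mul_distrib]
  apply Finset.prod_congr rfl
  intro k _
  by_cases hg : g k <;> by_cases hk : h k <;> simp [hg, hk] <;> ring

/-- The support set and its basic properties. -/
lemma measurableSet_Supp {K : ℕ} :
    MeasurableSet {x : Fin K → ℝ | ∀ k, x k ∈ Set.Ioc (0:ℝ) 1} := by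
  have : {x : Fin K → ℝ | ∀ k, x k ∈ Set.Ioc (0:ℝ) 1} =
      ⋂ k, (fun x : Fin K → ℝ => x k) ⁻¹' Set.Ioc (0:ℝ) 1 := by
    ext x; simp
  rw [this]
  exact MeasurableSet.iInter fun k => (measurable_pi_apply k) measurableSet_Ioc

lemma ae_mem_Supp {K : ℕ} (Q : Measure (Fin K → ℝ)) [IsProbabilityMeasure Q]
    (hsupp : Q {x | ∀ k, x k ∈ Set.Ioc (0 : ℝ) 1} = 1) :
    ∀ᵐ x ∂Q, ∀ k, x k ∈ Set.Ioc (0:ℝ) 1 := by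
  rw [ae_iff]
  have : {x : Fin K → ℝ | ¬ ∀ k, x k ∈ Set.Ioc (0:ℝ) 1} =
      {x : Fin K → ℝ | ∀ k, x k ∈ Set.Ioc (0:ℝ) 1}ᶜ := rfl
  rw [this, prob_compl_eq_zero_iff measurableSet_Supp]
  exact hsupp

lemma integrable_cell_integrand {K : ℕ} (Q : Measure (Fin K → ℝ)) [IsProbabilityMeasure Q]
    (hsupp : Q {x | ∀ k, x k ∈ Set.Ioc (0 : ℝ) 1} = 1) (h : Fin K → Bool) :
    Integrable (fun x : Fin K → ℝ => ∏ k, (if h k then x k else 1 - x k)) Q := by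
  have hc : Continuous (fun x : Fin K → ℝ => ∏ k, (if h k then x k else 1 - x k)) := by
    apply continuous_finset_prod
    intro k _
    by_cases hk : h k
    · simpa [hk] using continuous_apply k
    · simpa [hk] using (by fun_prop : Continuous fun x : Fin K → ℝ => 1 - x k)
  refine (integrable_const (1:ℝ)).mono' hc.aestronglyMeasurable ?_
  filter_upwards [ae_mem_Supp Q hsupp] with x hx
  simp only [Real.norm_eq_abs, norm_one]
  rw [Finset.abs_prod]
  apply Finset.prod_le_one
  · intro k _; exact abs_nonneg _
  · intro k _
    by_cases hk : h k
    · rw [if_pos hk, abs_of_pos (hx k).1]; exact (hx k).2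
    · rw [if_neg hk, abs_of_nonneg (by linarith [(hx k).2])]
      linarith [(hx k).1]

lemma integrable_moment_integrand {K : ℕ} (Q : Measure (Fin K → ℝ)) [IsProbabilityMeasure Q]
    (hsupp : Q {x | ∀ k, x k ∈ Set.Ioc (0 : ℝ) 1} = 1) (h : Fin K → Bool) :
    Integrable (fun x : Fin K → ℝ => ∏ k, (if h k then x k else 1)) Q := by
  have hc : Continuous (fun x : Fin K → ℝ => ∏ k, (if h k then x k else 1)) := by
    apply continuous_finset_prod
    intro k _
    by_cases hk : h k
    · simpa [hk] using continuous_apply k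
    · simp only [hk, if_false]
      exact continuous_const
  refine (integrable_const (1:ℝ)).mono' hc.aestronglyMeasurable ?_
  filter_upwards [ae_mem_Supp Q hsupp] with x hx
  simp only [Real.norm_eq_abs, norm_one]
  rw [Finset.abs_prod]
  apply Finset.prod_le_one
  · intro k _; exact abs_nonneg _
  · intro k _
    by_cases hk : h k
    · rw [if_pos hk, abs_of_pos (hx k).1]; exact (hx k).2
    · simp [hk]

lemma moment_eq_sum_cell {K : ℕ} (Q : Measure (Fin K → ℝ)) [IsProbabilityMeasure Q]
    (hsupp : Q {x | ∀ k, x k ∈ Set.Ioc (0 : ℝ) 1} = 1) (h : Fin K → Bool) :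
    mixedMoment Q h = ∑ g ∈ Tset h, cellProb Q g := by
  unfold mixedMoment cellProb
  rw [← integral_finset_sum _ (fun g _ => integrable_cell_integrand Q hsupp g)]
  exact integral_congr_ae (Filter.Eventually.of_forall fun x => pointwise_I1 h x)

lemma cell_eq_sum_moment {K : ℕ} (Q : Measure (Fin K → ℝ)) [IsProbabilityMeasure Q]
    (hsupp : Q {x | ∀ k, x k ∈ Set.Ioc (0 : ℝ) 1} = 1) (h : Fin K → Bool) :
    cellProb Q h = ∑ g ∈ Tset h, sgn h g * mixedMoment Q g := by
  unfold cellProb mixedMoment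
  have : ∀ g ∈ Tset h, Integrable
      (fun x : Fin K → ℝ => sgn h g * ∏ k, (if g k then x k else 1)) Q :=
    fun g _ => (integrable_moment_integrand Q hsupp g).const_mul _
  rw [show (∑ g ∈ Tset h, sgn h g * ∫ x, (∏ k, (if g k then x k else 1)) ∂Q) =
      ∑ g ∈ Tset h, ∫ x, sgn h g * (∏ k, (if g k then x k else 1)) ∂Q from
    Finset.sum_congr rfl fun g _ => (integral_const_mul _ _).symm]
  rw [← integral_finset_sum _ this]
  exact integral_congr_ae (Filter.Eventually.of_forall fun x => pointwise_I2 h x)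

lemma moment_zero {K : ℕ} (Q : Measure (Fin K → ℝ)) [IsProbabilityMeasure Q] :
    mixedMoment Q (fun _ => false) = 1 := by
  unfold mixedMoment
  simp

lemma one_sub_missProb {K : ℕ} (Q : Measure (Fin K → ℝ)) [IsProbabilityMeasure Q]
    (hsupp : Q {x | ∀ k, x k ∈ Set.Ioc (0 : ℝ) 1} = 1) :
    1 - missProb Q = -∑ g ∈ Hstar K, sgn (fun _ => false) g * mixedMoment Q g := by
  have h0 : missProb Q = ∑ g : Fin K → Bool, sgn (fun _ => false) g * mixedMoment Q g := by
    rw [missProb, cell_eq_sum_moment Q hsupp]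
    have hT : Tset (fun _ => false : Fin K → Bool) = Finset.univ := by
      ext g; simp [mem_Tset]
    rw [hT]
  have hsplit : (∑ g : Fin K → Bool, sgn (fun _ => false) g * mixedMoment Q g) =
      (∑ g ∈ Hstar K, sgn (fun _ => false) g * mixedMoment Q g) + 1 := by
    rw [Hstar, ← Finset.sum_filter_add_sum_filter_not Finset.univ
      (fun h : Fin K → Bool => h ≠ fun _ => false)]
    congr 1
    have : Finset.univ.filter (fun h : Fin K → Bool => ¬ h ≠ fun _ => false) =
        {fun _ => false} := by
      ext g; simp
    rw [this, Finset.sum_singleton, moment_zero, sgn]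
    simp
  rw [h0, hsplit]
  ring

lemma missProb_lt_one {K : ℕ} (hK : 2 ≤ K) (Q : Measure (Fin K → ℝ)) [IsProbabilityMeasure Q]
    (hsupp : Q {x | ∀ k, x k ∈ Set.Ioc (0 : ℝ) 1} = 1) :
    missProb Q < 1 := by
  have hint := integrable_cell_integrand Q hsupp (fun _ => false)
  have hnn : 0 ≤ᵐ[Q] fun x : Fin K → ℝ => 1 - ∏ k, (1 - x k) := by
    filter_upwards [ae_mem_Supp Q hsupp] with x hx
    have : (∏ k, (1 - x k)) ≤ 1 := by
      apply Finset.prod_le_one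
      · intro k _; linarith [(hx k).2]
      · intro k _; linarith [(hx k).1]
    simpa using this
  have hintt : Integrable (fun x : Fin K → ℝ => 1 - ∏ k, (1 - x k)) Q := by
    apply Integrable.sub (integrable_const 1)
    simpa using hint
  have key : 0 < ∫ x, (1 - ∏ k, (1 - x k)) ∂Q := by
    rw [integral_pos_iff_support_of_nonneg_ae hnn hintt]
    apply lt_of_lt_of_le (by norm_num : (0:ENNReal) < 1)
    rw [← hsupp]
    apply measure_mono
    intro x hx
    simp only [Function.mem_support]
    have hlt : (∏ k, (1 - x k)) < 1 := by
      have k0 : Fin K := ⟨0, by omega⟩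
      have hrest : (∏ k ∈ Finset.univ.erase k0, (1 - x k)) ≤ 1 :=
        Finset.prod_le_one (fun k _ => by linarith [(hx k).2]) (fun k _ => by linarith [(hx k).1])
      have h0le : (0:ℝ) ≤ 1 - x k0 := by linarith [(hx k0).2]
      calc (∏ k, (1 - x k))
          = (1 - x k0) * ∏ k ∈ Finset.univ.erase k0, (1 - x k) :=
            (Finset.mul_prod_erase _ _ (Finset.mem_univ k0)).symm
        _ ≤ (1 - x k0) * 1 := mul_le_mul_of_nonneg_left hrest h0le
        _ < 1 := by linarith [(hx k0).1]
    intro hc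
    rw [sub_eq_zero] at hc
    exact absurd hc.symm (ne_of_lt hlt)
  have : ∫ x, (1 - ∏ k, (1 - x k)) ∂Q = 1 - missProb Q := by
    rw [integral_sub (integrable_const 1) (by simpa using hint)]
    simp [missProb, cellProb]
  linarith [this ▸ key]

theorem condCellProbs_eq_iff_moments_proportional (K : ℕ) (hK : 2 ≤ K)
    (Q R : Measure (Fin K → ℝ)) [IsProbabilityMeasure Q] [IsProbabilityMeasure R]
    (hsuppQ : Q {x | ∀ k, x k ∈ Set.Ioc (0 : ℝ) 1} = 1)
    (hsuppR : R {x | ∀ k, x k ∈ Set.Ioc (0 : ℝ) 1} = 1) :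
    ((∀ h ∈ Hstar K, condCellProb Q h = condCellProb R h) ↔
      ∃ A : ℝ, 0 < A ∧ ∀ h ∈ Hstar K, mixedMoment Q h = A * mixedMoment R h) ∧
    (∀ A : ℝ, 0 < A → (∀ h ∈ Hstar K, mixedMoment Q h = A * mixedMoment R h) →
      A = (1 - missProb Q) / (1 - missProb R)) := by
  have haQ : 0 < 1 - missProb Q := by linarith [missProb_lt_one hK Q hsuppQ]
  have haR : 0 < 1 - missProb R := by linarith [missProb_lt_one hK R hsuppR]
  have key2 : ∀ A : ℝ, (∀ h ∈ Hstar K, mixedMoment Q h = A * mixedMoment R h) →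
      A = (1 - missProb Q) / (1 - missProb R) := by
    intro A hA
    have h1 : 1 - missProb Q = A * (1 - missProb R) := by
      have hs : (∑ g ∈ Hstar K, sgn (fun _ => false) g * mixedMoment Q g)
          = A * ∑ g ∈ Hstar K, sgn (fun _ => false) g * mixedMoment R g := by
        rw [Finset.mul_sum]
        exact Finset.sum_congr rfl fun g hg => by rw [hA g hg]; ring
      rw [one_sub_missProb Q hsuppQ, one_sub_missProb R hsuppR, hs]
      ring
    rw [h1, mul_div_assoc, div_self haR.ne', mul_one]
  refine ⟨⟨?_, ?_⟩, fun A _ hA => key2 A hA⟩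
  · intro hc
    refine ⟨(1 - missProb Q) / (1 - missProb R), div_pos haQ haR, ?_⟩
    intro h hh
    rw [moment_eq_sum_cell Q hsuppQ h, moment_eq_sum_cell R hsuppR h, Finset.mul_sum]
    apply Finset.sum_congr rfl
    intro g hg
    have hcg := hc g (mem_Hstar_of_Tset hh hg)
    unfold condCellProb at hcg
    rw [div_eq_div_iff haQ.ne' haR.ne'] at hcg
    field_simp
    linarith [hcg]
  · rintro ⟨A, hApos, hA⟩
    intro h hh
    have hAval := key2 A hA
    have hcell : cellProb Q h = A * cellProb R h := by
      rw [cell_eq_sum_moment Q hsuppQ h, cell_eq_sum_moment R hsuppR h, Finset.mul_sum]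
      refine Finset.sum_congr rfl fun g hg => ?_
      rw [hA g (mem_Hstar_of_Tset hh hg)]
      ring
    unfold condCellProb
    rw [hcell, hAval]
    field_simp
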